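/- If each F_j is the proximal map of a convex differentiable f_j and the F_j are stacked into F acting componentwise, then at any MACE solution x* (with all components equal to x* and G the simple averaging operator), the consensus condition F(x*) = G(x*) implies Σ_{j=0}^{J-1} ∇f_j(x*) = 0, i.e., x* minimizes Σ_j f_j. -/

import Mathlib

open scoped RealInnerProductSpace

lemma convex_first_order {E : Type*} [NormedAddCommGroup E] [InnerProductSpace ℝ E] [CompleteSpace E]
    {f : E → ℝ} (hc : ConvexOn ℝ Set.univ f) {g x : E} (hg : HasGradientAt f g x) (y : E) :
    f x + ⟪g, y - x⟫ ≤ f y := by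
  set d := y - x with hd
  set φ : ℝ → ℝ := fun t => f (x + t • d) with hφ
  have hline : HasDerivAt (fun t : ℝ => x + t • d) d 0 := by
    simpa using ((hasDerivAt_id (0 : ℝ)).smul_const d).const_add x
  have h1 := hasGradientAt_iff_hasFDerivAt.1 hg
  have h2 : HasFDerivAt f (InnerProductSpace.toDual ℝ E g) ((fun t : ℝ => x + t • d) 0) := by
    simpa using h1
  have hphi : HasDerivAt φ ⟪g, d⟫ 0 := by
    simpa [hφ, Function.comp_def] using h2.comp_hasDerivAt 0 hline
  have htend : Filter.Tendsto (slope φ 0) (nhdsWithin 0 (Set.Ioi 0)) (nhds ⟪g, d⟫) :=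
    (hasDerivAt_iff_tendsto_slope.1 hphi).mono_left
      (nhdsWithin_mono 0 (fun t ht => ne_of_gt ht))
  have key : ⟪g, d⟫ ≤ f y - f x := by
    refine le_of_tendsto htend ?_
    filter_upwards [Ioc_mem_nhdsGT_of_mem (Set.mem_Ico.2 ⟨le_refl (0:ℝ), zero_lt_one⟩)]
      with t ht
    have ht0 : 0 < t := ht.1
    have ht1 : t ≤ 1 := ht.2
    have hxt : x + t • d = (1 - t) • x + t • y := by rw [hd]; module
    have hcv := hc.2 (Set.mem_univ x) (Set.mem_univ y) (by linarith : (0:ℝ) ≤ 1 - t)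
      ht0.le (by ring)
    have hφt : φ t ≤ (1 - t) * f x + t * f y := by
      rw [hφ]; simpa [hxt, smul_eq_mul] using hcv
    have hφ0 : φ 0 = f x := by simp [hφ]
    rw [slope_def_field, sub_zero, hφ0, div_le_iff₀ ht0]
    nlinarith
  linarith

theorem mace_prox_consensus_minimizes_sum
    (J n : ℕ) (hJ : 0 < J)
    (f : Fin J → EuclideanSpace ℝ (Fin n) → ℝ)
    (hconv : ∀ j, ConvexOn ℝ Set.univ (f j))
    (g : Fin J → EuclideanSpace ℝ (Fin n) → EuclideanSpace ℝ (Fin n))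
    (hg : ∀ j x, HasGradientAt (f j) (g j x) x)
    (σ : ℝ) (hσ : 0 < σ)
    (F : Fin J → EuclideanSpace ℝ (Fin n) → EuclideanSpace ℝ (Fin n))
    (hF : ∀ j v u, f j (F j v) + ‖F j v - v‖ ^ 2 / (2 * σ ^ 2)
            ≤ f j u + ‖u - v‖ ^ 2 / (2 * σ ^ 2))
    (x : Fin J → EuclideanSpace ℝ (Fin n))
    (xbar : EuclideanSpace ℝ (Fin n))
    (hxbar : xbar = (J : ℝ)⁻¹ • ∑ j, x j)
    (hMACE : ∀ j, F j (x j) = xbar) :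
    (∑ j, g j xbar = 0) ∧ ∀ y, ∑ j, f j xbar ≤ ∑ j, f j y := by
  have hσ2 : (σ:ℝ)^2 ≠ 0 := by positivity
  have h2σ2 : (2*σ^2 : ℝ) ≠ 0 := by positivity
  -- gradient identity at each j
  have hgrad : ∀ j, g j xbar = (σ ^ 2)⁻¹ • (x j - xbar) := by
    intro j
    set v := x j with hv
    have hmin : IsLocalMin (fun u => f j u + ‖u - v‖ ^ 2 / (2 * σ ^ 2)) xbar :=
      Filter.Eventually.of_forall fun u => by
        have h0 := hF j v u
        rw [hv, hMACE j] at h0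
        exact h0
    have hq : HasFDerivAt (fun u : EuclideanSpace ℝ (Fin n) => ‖u - v‖ ^ 2 / (2 * σ ^ 2))
        ((2 * σ ^ 2)⁻¹ • (2 • ((innerSL ℝ (xbar - v)).comp (ContinuousLinearMap.id ℝ (EuclideanSpace ℝ (Fin n))))))
        xbar := by
      have h1 : HasFDerivAt (fun u : EuclideanSpace ℝ (Fin n) => u - v) (ContinuousLinearMap.id ℝ (EuclideanSpace ℝ (Fin n))) xbar :=
        (hasFDerivAt_id xbar).sub_const v
      have h2 := h1.norm_sq
      have h3 := h2.const_mul ((2 * σ ^ 2)⁻¹)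
      simpa [div_eq_inv_mul] using h3
    have hsum : HasFDerivAt (fun u : EuclideanSpace ℝ (Fin n) => f j u + ‖u - v‖ ^ 2 / (2 * σ ^ 2))
        (InnerProductSpace.toDual ℝ (EuclideanSpace ℝ (Fin n)) (g j xbar)
          + (2 * σ ^ 2)⁻¹ • (2 • ((innerSL ℝ (xbar - v)).comp (ContinuousLinearMap.id ℝ (EuclideanSpace ℝ (Fin n))))))
        xbar := (hasGradientAt_iff_hasFDerivAt.1 (hg j xbar)).add hq
    have hzero := hmin.hasFDerivAt_eq_zero hsum
    have key : ∀ w : EuclideanSpace ℝ (Fin n), ⟪g j xbar - (σ ^ 2)⁻¹ • (v - xbar), w⟫ = 0 := by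
      intro w
      have hw := DFunLike.congr_fun hzero w
      simp only [ContinuousLinearMap.add_apply, ContinuousLinearMap.smul_apply,
        ContinuousLinearMap.coe_smul', Pi.smul_apply, ContinuousLinearMap.coe_comp',
        Function.comp_apply, ContinuousLinearMap.coe_id', id_eq,
        InnerProductSpace.toDual_apply_apply, innerSL_apply_apply, ContinuousLinearMap.zero_apply,
        smul_eq_mul, nsmul_eq_mul, Nat.cast_ofNat] at hw
      rw [inner_sub_left, real_inner_smul_left, inner_sub_left]
      have hsub : ⟪xbar - v, w⟫ = ⟪xbar, w⟫ - ⟪v, w⟫ := inner_sub_left _ _ _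
      rw [hsub] at hw
      field_simp at hw ⊢
      nlinarith [hw]
    have := key (g j xbar - (σ ^ 2)⁻¹ • (v - xbar))
    rw [inner_self_eq_zero] at this
    have := sub_eq_zero.1 this
    rw [this, hv]
  -- sum of x's
  have hsumx : ∑ j, x j = (J : ℝ) • xbar := by
    rw [hxbar, smul_smul]
    rw [mul_inv_cancel₀ (by exact_mod_cast hJ.ne' : (J:ℝ) ≠ 0), one_smul]
  have hsumg : ∑ j, g j xbar = 0 := by
    simp only [hgrad]
    rw [← Finset.smul_sum, Finset.sum_sub_distrib, hsumx, Finset.sum_const,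
      Finset.card_univ, Fintype.card_fin, Nat.cast_smul_eq_nsmul ℝ (J) xbar]
    simp
  refine ⟨hsumg, fun y => ?_⟩
  have h1 : ∀ j, f j xbar + ⟪g j xbar, y - xbar⟫ ≤ f j y :=
    fun j => convex_first_order (hconv j) (hg j xbar) y
  have h2 : ∑ j, (f j xbar + ⟪g j xbar, y - xbar⟫) ≤ ∑ j, f j y :=
    Finset.sum_le_sum fun j _ => h1 j
  have h3 : ∑ j, (f j xbar + ⟪g j xbar, y - xbar⟫)
      = ∑ j, f j xbar + ⟪∑ j, g j xbar, y - xbar⟫ := by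
    rw [Finset.sum_add_distrib, sum_inner]
  rw [h3, hsumg] at h2
  simpa using h2
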